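/- arXiv:math/0606751 — 2 statements merged into one kernel-verified Lean document; each statement's English description precedes it below -/
import Mathlib

section
/- Fix δ > 0 and consider the once-reinforced random walk with reinforcement parameter δ on the nonnegative integers started at 0. Then for every n ≥ 1, the probability that, after the first jump (which is necessarily to 1), the walk reaches n+1 before returning to 0 equals ∏_{j=1}^n j/(j + δ). -/
open MeasureTheory Finset

/-- One-step transition probability of the once-reinforced random walk on the nonnegative
integers, with reinforcement parameter `δ`, as a function of the current position `j`, the
running maximum `m` of the walk so far, and the proposed next position `next`:
from `0` the walk steps to `1`; strictly below the running maximum it is a fair simple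
random walk; at the running maximum `j ≥ 1` it steps to `j+1` with probability `1/(1+δ)`
and to `j-1` with probability `δ/(1+δ)`. -/
noncomputable def orwStep (δ : ℝ) (j m next : ℕ) : ℝ :=
  if j = 0 then (if next = 1 then 1 else 0)
  else if j < m then
    (if next = j + 1 then 1 / 2 else if next = j - 1 then 1 / 2 else 0)
  else
    (if next = j + 1 then 1 / (1 + δ) else if next = j - 1 then δ / (1 + δ) else 0)

namespace ORW

/-- position along a path `0 :: l`. -/
def pa (l : List ℕ) (j : ℕ) : ℕ := (0 :: l).getD j 0

/-- weight of the path `0 :: l`. -/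
noncomputable def wl (δ : ℝ) (l : List ℕ) : ℝ :=
  ∏ i ∈ Finset.range l.length,
    orwStep δ (pa l i) ((Finset.range (i+1)).sup (pa l)) (pa l (i+1))

def jp (l : List ℕ) : ℕ := pa l l.length
def mp (l : List ℕ) : ℕ := (Finset.range (l.length+1)).sup (pa l)

/-- lists of length k with entries in [1,n] -/
def Lset (n : ℕ) : ℕ → Finset (List ℕ)
  | 0 => {[]}
  | k+1 => (Lset n k).biUnion (fun t => (Finset.Icc 1 n).image (fun b => t ++ [b]))

noncomputable def g (δ : ℝ) (n m : ℕ) : ℝ := ∏ i ∈ Finset.Icc m n, (i : ℝ)/((i:ℝ)+δ)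
noncomputable def h (δ : ℝ) (n j m : ℕ) : ℝ := ((j:ℝ)/(m:ℝ)) * g δ n m

noncomputable def Phi (δ : ℝ) (n : ℕ) : ℕ → ℕ → ℕ → ℝ
  | 0, _, _ => 1
  | L+1, j, m => ∑ b ∈ Finset.Icc 1 n, orwStep δ j m b * Phi δ n L b (max m b)

noncomputable def stepUp (δ : ℝ) (j m : ℕ) : ℝ := if j < m then 1/2 else 1/(1+δ)
noncomputable def stepDown (δ : ℝ) (j m : ℕ) : ℝ := if j < m then 1/2 else δ/(1+δ)

variable {δ : ℝ}

lemma orwStep_nonneg (hδ : 0 < δ) (j m b : ℕ) : 0 ≤ orwStep δ j m b := by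
  have h1 : (0:ℝ) < 1 + δ := by linarith
  unfold orwStep; split_ifs <;>
    first
      | exact div_nonneg hδ.le h1.le
      | exact div_nonneg zero_le_one h1.le
      | norm_num
      | linarith

lemma orwStep_eq {j : ℕ} (hj : 1 ≤ j) (m b : ℕ) :
    orwStep δ j m b = (if b = j + 1 then stepUp δ j m else 0)
      + (if b = j - 1 then stepDown δ j m else 0) := by
  have : j ≠ 0 := by omega
  have hne : j + 1 ≠ j - 1 := by omega
  unfold orwStep stepUp stepDown
  split_ifs <;> first | (exfalso; omega) | ring

lemma stepUp_add_stepDown (hδ : 0 < δ) (j m : ℕ) : stepUp δ j m + stepDown δ j m = 1 := by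
  have h1 : (1:ℝ) + δ ≠ 0 := by intro h; linarith
  unfold stepUp stepDown; split_ifs <;> field_simp <;> norm_num

lemma stepUp_nonneg (hδ : 0 < δ) (j m : ℕ) : 0 ≤ stepUp δ j m := by
  have h1 : (0:ℝ) < 1 + δ := by linarith
  unfold stepUp; split_ifs
  · norm_num
  · exact div_nonneg zero_le_one h1.le

lemma stepDown_nonneg (hδ : 0 < δ) (j m : ℕ) : 0 ≤ stepDown δ j m := by
  have h1 : (0:ℝ) < 1 + δ := by linarith
  unfold stepDown; split_ifs
  · norm_num
  · exact div_nonneg hδ.le h1.le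

lemma min_le_stepUp (j m : ℕ) : min (1/2 : ℝ) (1/(1+δ)) ≤ stepUp δ j m := by
  unfold stepUp; split_ifs
  · exact min_le_left _ _
  · exact min_le_right _ _

lemma wl_nonneg (hδ : 0 < δ) (l : List ℕ) : 0 ≤ wl δ l :=
  Finset.prod_nonneg fun i _ => orwStep_nonneg hδ _ _ _


lemma pa_zero (l : List ℕ) : pa l 0 = 0 := rfl

lemma pa_cons (l : List ℕ) (j : ℕ) : pa l (j+1) = l.getD j 0 := rfl

lemma pa_append (t : List ℕ) (b : ℕ) {j : ℕ} (hj : j ≤ t.length) :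
    pa (t ++ [b]) j = pa t j := by
  unfold pa
  have h : (0 : ℕ) :: (t ++ [b]) = (0 :: t) ++ [b] := rfl
  rw [h, List.getD_append _ _ _ _ (by simp; omega)]

lemma pa_append_last (t : List ℕ) (b : ℕ) :
    pa (t ++ [b]) (t.length + 1) = b := by
  show ((0 :: t) ++ [b]).getD (t.length + 1) 0 = b
  rw [List.getD_append_right]
  · simp
  · simp

lemma pa_le (t : List ℕ) {c : ℕ} (hc : ∀ x ∈ t, x ≤ c) (j : ℕ) : pa t j ≤ c := by
  unfold pa
  rcases Nat.lt_or_ge j (t.length + 1) with hj | hj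
  · rcases Nat.eq_zero_or_pos j with rfl | hj0
    · exact Nat.zero_le c
    · obtain ⟨i, rfl⟩ := Nat.exists_eq_add_of_lt hj0
      simp only [zero_add, List.getD_cons_succ]
      have hi : i < t.length := by omega
      rw [List.getD_eq_getElem _ _ hi]
      exact hc _ (List.getElem_mem hi)
  · rw [List.getD_eq_default]
    · exact Nat.zero_le c
    · simp; omega

lemma jp_append (t : List ℕ) (b : ℕ) : jp (t ++ [b]) = b := by
  unfold jp; rw [List.length_append, List.length_singleton, pa_append_last]

lemma mp_append (t : List ℕ) (b : ℕ) : mp (t ++ [b]) = max (mp t) b := by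
  unfold mp
  rw [List.length_append, List.length_singleton]
  have : t.length + 1 + 1 = (t.length + 1) + 1 := rfl
  rw [this, Finset.range_add_one, Finset.sup_insert]
  have h1 : (Finset.range (t.length+1)).sup (pa (t ++ [b]))
      = (Finset.range (t.length+1)).sup (pa t) := by
    apply Finset.sup_congr rfl
    intro j hj
    exact pa_append t b (by simpa using Nat.lt_succ_iff.mp (Finset.mem_range.mp hj))
  rw [h1, pa_append_last]
  exact sup_comm _ _

lemma wl_append (δ : ℝ) (t : List ℕ) (b : ℕ) :
    wl δ (t ++ [b]) = wl δ t * orwStep δ (jp t) (mp t) b := by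
  unfold wl
  rw [List.length_append, List.length_singleton, Finset.prod_range_succ]
  congr 1
  · apply Finset.prod_congr rfl
    intro i hi
    have hi' : i < t.length := Finset.mem_range.mp hi
    rw [pa_append t b (by omega), pa_append t b (by omega)]
    congr 1
    apply Finset.sup_congr rfl
    intro j hj
    exact pa_append t b (by have := Finset.mem_range.mp hj; omega)
  · rw [pa_append t b (le_refl _), pa_append_last]
    congr 1
    apply Finset.sup_congr rfl
    intro j hj
    exact pa_append t b (by have := Finset.mem_range.mp hj; omega)

lemma mem_Lset {n k : ℕ} {t : List ℕ} :
    t ∈ Lset n k ↔ t.length = k ∧ ∀ x ∈ t, x ∈ Finset.Icc 1 n := by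
  induction k generalizing t with
  | zero =>
    simp [Lset, List.length_eq_zero_iff]
    rintro rfl; simp
  | succ k ih =>
    simp only [Lset, Finset.mem_biUnion, Finset.mem_image]
    constructor
    · rintro ⟨s, hs, b, hb, rfl⟩
      obtain ⟨hlen, hmem⟩ := ih.mp hs
      refine ⟨by simp [hlen], ?_⟩
      intro x hx
      rcases List.mem_append.mp hx with hx | hx
      · exact hmem x hx
      · rw [List.mem_singleton.mp hx]; exact hb
    · rintro ⟨hlen, hmem⟩
      have hne : t ≠ [] := by intro h; subst h; simp at hlen
      obtain ⟨s, b, rfl⟩ := (List.eq_nil_or_concat t).resolve_left hne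
      rw [List.concat_eq_append] at *
      refine ⟨s, ih.mpr ⟨by simp at hlen; omega, fun x hx => hmem x (by simp [hx])⟩,
        b, hmem b (by simp), rfl⟩


lemma jp_le_mp (t : List ℕ) : jp t ≤ mp t :=
  Finset.le_sup (Finset.mem_range.mpr (Nat.lt_succ_self _))

lemma mp_le {n k : ℕ} {t : List ℕ} (ht : t ∈ Lset n k) : mp t ≤ n := by
  obtain ⟨-, hmem⟩ := mem_Lset.mp ht
  apply Finset.sup_le
  intro j _
  exact pa_le t (fun x hx => (Finset.mem_Icc.mp (hmem x hx)).2) j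

lemma jp_mem {n k : ℕ} (hk : 1 ≤ k) {t : List ℕ} (ht : t ∈ Lset n k) :
    jp t ∈ Finset.Icc 1 n := by
  obtain ⟨hlen, hmem⟩ := mem_Lset.mp ht
  have h1 : t.length - 1 < t.length := by omega
  have : jp t = t.getD (t.length - 1) 0 := by
    unfold jp
    have : t.length = (t.length - 1) + 1 := by omega
    rw [this, pa_cons]
    simp
  rw [this, List.getD_eq_getElem _ _ h1]
  exact hmem _ (List.getElem_mem h1)

lemma one_le_jp {n k : ℕ} (hk : 1 ≤ k) {t : List ℕ} (ht : t ∈ Lset n k) : 1 ≤ jp t :=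
  (Finset.mem_Icc.mp (jp_mem hk ht)).1

lemma sum_Lset_succ {n k : ℕ} (f : List ℕ → ℝ) :
    ∑ t ∈ Lset n (k+1), f t = ∑ t ∈ Lset n k, ∑ b ∈ Finset.Icc 1 n, f (t ++ [b]) := by
  have hL : Lset n (k+1)
      = (Lset n k).biUnion (fun t => (Finset.Icc 1 n).image (fun b => t ++ [b])) := rfl
  rw [hL, Finset.sum_biUnion]
  · apply Finset.sum_congr rfl
    intro t _
    rw [Finset.sum_image]
    intro b _ b' _ hb
    simpa using hb
  · intro t ht t' ht' htt'
    simp only [Function.onFun]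
    rw [Finset.disjoint_left]
    intro l hl hl'
    simp only [Finset.coe_image, Set.mem_image, Finset.mem_coe, Finset.mem_image] at hl hl'
    obtain ⟨b, -, rfl⟩ := hl
    obtain ⟨b', -, h⟩ := hl'
    apply htt'
    have hlen : (t' : List ℕ).length = t.length := by
      have := congrArg List.length h; simpa using this
    exact (List.append_inj_left' h (by simp)).symm


variable {n : ℕ}

lemma g_nonneg (hδ : 0 < δ) (m : ℕ) : 0 ≤ g δ n m :=
  Finset.prod_nonneg fun i _ => div_nonneg (Nat.cast_nonneg i) (by positivity)

lemma g_le_one (hδ : 0 < δ) (m : ℕ) : g δ n m ≤ 1 :=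
  Finset.prod_le_one (fun i _ => div_nonneg (Nat.cast_nonneg i) (by positivity))
    (fun i _ => by
      rw [div_le_one (by positivity)]
      linarith)

lemma g_succ (hδ : 0 < δ) {m : ℕ} (hm : 1 ≤ m) (hmn : m ≤ n) :
    g δ n m = ((m:ℝ)/((m:ℝ)+δ)) * g δ n (m+1) := by
  unfold g
  rw [← Finset.mul_prod_erase (Finset.Icc m n) _ (Finset.mem_Icc.mpr ⟨le_refl m, hmn⟩),
    Finset.Icc_erase_left, ← Finset.Icc_add_one_left_eq_Ioc]

lemma h_nonneg (hδ : 0 < δ) (j m : ℕ) : 0 ≤ h δ n j m :=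
  mul_nonneg (div_nonneg (Nat.cast_nonneg j) (Nat.cast_nonneg m)) (g_nonneg hδ m)

lemma h_le_one (hδ : 0 < δ) {j m : ℕ} (hjm : j ≤ m) : h δ n j m ≤ 1 := by
  rcases Nat.eq_zero_or_pos m with rfl | hm
  · have : j = 0 := by omega
    subst this
    simp [h, g_le_one hδ]
  · apply mul_le_one₀
    · rw [div_le_one (by exact_mod_cast hm)]
      exact_mod_cast hjm
    · exact g_nonneg hδ _
    · exact g_le_one hδ _

lemma h_zero (m : ℕ) : h δ n 0 m = 0 := by simp [h]

lemma h_top : h δ n (n+1) (n+1) = 1 := by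
  unfold h g
  rw [Finset.Icc_eq_empty (by omega), Finset.prod_empty, div_self (by positivity), one_mul]

lemma harmonic (hδ : 0 < δ) {j m : ℕ} (h1 : 1 ≤ j) (hjm : j ≤ m) (hmn : m ≤ n) :
    ∑ b ∈ Finset.Icc 0 (n+1), orwStep δ j m b * h δ n b (max m b) = h δ n j m := by
  have hrw : ∀ b ∈ Finset.Icc 0 (n+1),
      orwStep δ j m b * h δ n b (max m b)
        = (if b = j + 1 then stepUp δ j m * h δ n b (max m b) else 0)
          + (if b = j - 1 then stepDown δ j m * h δ n b (max m b) else 0) := by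
    intro b _
    rw [orwStep_eq h1, add_mul]
    congr 1 <;> split_ifs <;> ring
  rw [Finset.sum_congr rfl hrw, Finset.sum_add_distrib,
    Finset.sum_ite_eq' _ (j+1), Finset.sum_ite_eq' _ (j-1),
    if_pos (Finset.mem_Icc.mpr ⟨Nat.zero_le _, by omega⟩),
    if_pos (Finset.mem_Icc.mpr ⟨Nat.zero_le _, by omega⟩)]
  have hmax2 : max m (j-1) = m := by omega
  rw [hmax2]
  rcases Nat.lt_or_ge j m with hlt | hge
  · -- strictly below the maximum
    have hmax1 : max m (j+1) = m := by omega
    rw [hmax1]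
    unfold stepUp stepDown h
    rw [if_pos hlt, if_pos hlt]
    have hm0 : (m:ℝ) ≠ 0 := by
      have : 1 ≤ m := by omega
      exact_mod_cast Nat.one_le_iff_ne_zero.mp this
    have hc : ((j - 1 : ℕ) : ℝ) = (j:ℝ) - 1 := by
      have : (1:ℕ) ≤ j := h1
      push_cast [Nat.cast_sub this]
      ring
    push_cast [hc]
    field_simp
    ring
  · -- at the maximum
    have hje : j = m := le_antisymm hjm hge
    subst hje
    have hmax1 : max j (j+1) = j + 1 := by omega
    rw [hmax1]
    unfold stepUp stepDown
    rw [if_neg (lt_irrefl j), if_neg (lt_irrefl j)]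
    have hj0 : (j:ℝ) ≠ 0 := by
      exact_mod_cast Nat.one_le_iff_ne_zero.mp h1
    have hhtop : h δ n (j+1) (j+1) = g δ n (j+1) := by
      unfold h
      rw [div_self (by exact_mod_cast Nat.succ_ne_zero j), one_mul]
    rw [hhtop]
    unfold h
    rw [g_succ hδ h1 hmn]
    have hc : ((j - 1 : ℕ) : ℝ) = (j:ℝ) - 1 := by
      push_cast [Nat.cast_sub h1]
      ring
    rw [hc]
    have hd1 : (1:ℝ) + δ ≠ 0 := by positivity
    have hd2 : (j:ℝ) + δ ≠ 0 := by positivity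
    field_simp
    ring


lemma Icc_split (hn : 1 ≤ n) :
    Finset.Icc 0 (n+1) = insert 0 (insert (n+1) (Finset.Icc 1 n)) := by
  ext x
  simp only [Finset.mem_Icc, Finset.mem_insert]
  omega

lemma harmonic' (hδ : 0 < δ) (hn : 1 ≤ n) {j m : ℕ} (h1 : 1 ≤ j) (hjm : j ≤ m) (hmn : m ≤ n) :
    ∑ b ∈ Finset.Icc 1 n, orwStep δ j m b * h δ n b (max m b)
      = h δ n j m - orwStep δ j m (n+1) := by
  have key := harmonic hδ h1 hjm hmn (n := n)
  rw [Icc_split hn, Finset.sum_insert (by simp),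
    Finset.sum_insert (by simp)] at key
  have e0 : h δ n 0 (max m 0) = 0 := h_zero _
  have e1 : max m (n+1) = n + 1 := by omega
  rw [e0, mul_zero, zero_add, e1, h_top, mul_one] at key
  linarith

lemma wl_singleton (b : ℕ) : wl δ [b] = if b = 1 then 1 else 0 := by
  unfold wl
  rw [List.length_singleton, Finset.prod_range_one, Finset.range_one, Finset.sup_singleton]
  rfl

noncomputable def Aq (δ : ℝ) (n K : ℕ) : ℝ := ∑ t ∈ Lset n K, wl δ t * h δ n (jp t) (mp t)
noncomputable def Wq (δ : ℝ) (n K : ℕ) : ℝ := ∑ t ∈ Lset n K, wl δ t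
noncomputable def dq (δ : ℝ) (n k : ℕ) : ℝ := ∑ t ∈ Lset n k, wl δ (t ++ [n+1])
noncomputable def Dq (δ : ℝ) (n K : ℕ) : ℝ := ∑ k ∈ Finset.range K, dq δ n k

lemma mp_nil : mp ([] : List ℕ) = 0 := by
  unfold mp
  rw [List.length_nil, Finset.range_one, Finset.sup_singleton]
  rfl

lemma Aq_one (hδ : 0 < δ) (hn : 1 ≤ n) : Aq δ n 1 = g δ n 1 := by
  unfold Aq
  rw [sum_Lset_succ]
  have : Lset n 0 = {[]} := rfl
  rw [this, Finset.sum_singleton]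
  have hrw : ∀ b ∈ Finset.Icc 1 n,
      wl δ ([] ++ [b]) * h δ n (jp ([] ++ [b])) (mp ([] ++ [b]))
        = if b = 1 then h δ n 1 1 else 0 := by
    intro b _
    have hj : jp [b] = b := jp_append [] b
    have hm : mp [b] = max (mp []) b := mp_append [] b
    rw [List.nil_append, wl_singleton, hj, hm, mp_nil]
    split_ifs with hb
    · subst hb; simp
    · ring
  rw [Finset.sum_congr rfl hrw, Finset.sum_ite_eq' _ 1,
    if_pos (Finset.mem_Icc.mpr ⟨le_refl 1, hn⟩)]
  unfold h
  norm_num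

lemma Aq_succ (hδ : 0 < δ) (hn : 1 ≤ n) {K : ℕ} (hK : 1 ≤ K) :
    Aq δ n (K+1) = Aq δ n K - dq δ n K := by
  unfold Aq dq
  rw [sum_Lset_succ, ← Finset.sum_sub_distrib]
  apply Finset.sum_congr rfl
  intro t ht
  have hrw : ∀ b ∈ Finset.Icc 1 n,
      wl δ (t ++ [b]) * h δ n (jp (t ++ [b])) (mp (t ++ [b]))
        = wl δ t * (orwStep δ (jp t) (mp t) b * h δ n b (max (mp t) b)) := by
    intro b _
    rw [wl_append, jp_append, mp_append]
    ring
  rw [Finset.sum_congr rfl hrw, ← Finset.mul_sum,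
    harmonic' hδ hn (one_le_jp hK ht) (jp_le_mp t) (mp_le ht), wl_append]
  ring

lemma Aq_add_Dq (hδ : 0 < δ) (hn : 1 ≤ n) : ∀ K, 1 ≤ K → Aq δ n K + Dq δ n K = g δ n 1 := by
  intro K hK
  induction K with
  | zero => omega
  | succ K ih =>
    rcases Nat.eq_zero_or_pos K with rfl | hK1
    · rw [Aq_one hδ hn]
      unfold Dq
      rw [Finset.sum_range_one]
      unfold dq
      have : Lset n 0 = {[]} := rfl
      rw [this, Finset.sum_singleton, List.nil_append, wl_singleton,
        if_neg (by omega), add_zero]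
    · rw [Aq_succ hδ hn hK1]
      unfold Dq
      rw [Finset.sum_range_succ]
      have := ih hK1
      unfold Dq at this
      linarith


lemma Phi_nonneg (hδ : 0 < δ) : ∀ (L j m : ℕ), 0 ≤ Phi δ n L j m := by
  intro L
  induction L with
  | zero => intro j m; norm_num [Phi]
  | succ L ih =>
    intro j m
    apply Finset.sum_nonneg
    intro b _
    exact mul_nonneg (orwStep_nonneg hδ _ _ _) (ih _ _)

lemma step_total (hδ : 0 < δ) {j : ℕ} (h1 : 1 ≤ j) (hjn : j ≤ n) (m : ℕ) :
    ∑ b ∈ Finset.Icc 0 (n+1), orwStep δ j m b = 1 := by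
  have hrw : ∀ b ∈ Finset.Icc 0 (n+1),
      orwStep δ j m b = (if b = j + 1 then stepUp δ j m else 0)
        + (if b = j - 1 then stepDown δ j m else 0) := fun b _ => orwStep_eq h1 m b
  rw [Finset.sum_congr rfl hrw, Finset.sum_add_distrib,
    Finset.sum_ite_eq' _ (j+1), Finset.sum_ite_eq' _ (j-1),
    if_pos (Finset.mem_Icc.mpr ⟨Nat.zero_le _, by omega⟩),
    if_pos (Finset.mem_Icc.mpr ⟨Nat.zero_le _, by omega⟩)]
  exact stepUp_add_stepDown hδ j m

lemma step_sum_Icc (hδ : 0 < δ) (hn : 1 ≤ n) {j : ℕ} (h1 : 1 ≤ j) (hjn : j ≤ n) (m : ℕ) :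
    ∑ b ∈ Finset.Icc 1 n, orwStep δ j m b
      = 1 - orwStep δ j m 0 - orwStep δ j m (n+1) := by
  have key := step_total hδ h1 hjn (n := n) m
  rw [Icc_split hn, Finset.sum_insert (by simp),
    Finset.sum_insert (by simp)] at key
  linarith

lemma step_sum_le_one (hδ : 0 < δ) (hn : 1 ≤ n) {j : ℕ} (h1 : 1 ≤ j) (hjn : j ≤ n) (m : ℕ) :
    ∑ b ∈ Finset.Icc 1 n, orwStep δ j m b ≤ 1 := by
  rw [step_sum_Icc hδ hn h1 hjn]
  have := orwStep_nonneg hδ (δ := δ) j m 0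
  have := orwStep_nonneg hδ (δ := δ) j m (n+1)
  linarith

lemma Phi_le_one (hδ : 0 < δ) (hn : 1 ≤ n) :
    ∀ (L : ℕ) {j m : ℕ}, 1 ≤ j → j ≤ m → m ≤ n → Phi δ n L j m ≤ 1 := by
  intro L
  induction L with
  | zero => intro j m _ _ _; norm_num [Phi]
  | succ L ih =>
    intro j m h1 hjm hmn
    show ∑ b ∈ Finset.Icc 1 n, orwStep δ j m b * Phi δ n L b (max m b) ≤ 1
    calc ∑ b ∈ Finset.Icc 1 n, orwStep δ j m b * Phi δ n L b (max m b)
        ≤ ∑ b ∈ Finset.Icc 1 n, orwStep δ j m b := by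
          apply Finset.sum_le_sum
          intro b hb
          obtain ⟨hb1, hb2⟩ := Finset.mem_Icc.mp hb
          have := ih hb1 (le_max_right m b) (by omega)
          have hnn := orwStep_nonneg hδ (δ := δ) j m b
          nlinarith
      _ ≤ 1 := step_sum_le_one hδ hn h1 (by omega) m

lemma mu_pos (hδ : 0 < δ) : 0 < min (1/2 : ℝ) (1/(1+δ)) := by
  apply lt_min <;> positivity

lemma mu_le_one (hδ : 0 < δ) : min (1/2 : ℝ) (1/(1+δ)) ≤ 1 :=
  le_trans (min_le_left _ _) (by norm_num)

lemma Phi_decay (hδ : 0 < δ) (hn : 1 ≤ n) :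
    ∀ (L : ℕ) {j m : ℕ}, 1 ≤ j → j ≤ m → m ≤ n → n + 1 ≤ j + L →
      Phi δ n L j m ≤ 1 - (min (1/2 : ℝ) (1/(1+δ)))^L := by
  set μ := min (1/2 : ℝ) (1/(1+δ)) with hμ
  intro L
  induction L with
  | zero => intro j m h1 hjm hmn hreach; omega
  | succ L ih =>
    intro j m h1 hjm hmn hreach
    have hμ0 : 0 < μ := mu_pos hδ
    have hμ1 : μ ≤ 1 := mu_le_one hδ
    have hstepup : orwStep δ j m (j+1) = stepUp δ j m := by
      rw [orwStep_eq h1, if_pos rfl, if_neg (by omega), add_zero]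
    show ∑ b ∈ Finset.Icc 1 n, orwStep δ j m b * Phi δ n L b (max m b) ≤ 1 - μ^(L+1)
    rcases Nat.lt_or_ge j n with hlt | hge
    · -- j < n, so j+1 ∈ Icc 1 n
      have hj1mem : j + 1 ∈ Finset.Icc 1 n := Finset.mem_Icc.mpr ⟨by omega, by omega⟩
      rw [← Finset.add_sum_erase _ _ hj1mem]
      have hterm : orwStep δ j m (j+1) * Phi δ n L (j+1) (max m (j+1))
          ≤ orwStep δ j m (j+1) * (1 - μ^L) := by
        apply mul_le_mul_of_nonneg_left _ (orwStep_nonneg hδ _ _ _)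
        exact ih (by omega) (le_max_right _ _) (by omega) (by omega)
      have hrest : ∑ b ∈ (Finset.Icc 1 n).erase (j+1),
          orwStep δ j m b * Phi δ n L b (max m b)
            ≤ ∑ b ∈ (Finset.Icc 1 n).erase (j+1), orwStep δ j m b := by
        apply Finset.sum_le_sum
        intro b hb
        obtain ⟨hb1, hb2⟩ := Finset.mem_Icc.mp (Finset.mem_of_mem_erase hb)
        have := Phi_le_one hδ hn L hb1 (le_max_right m b) (by omega)
        have hnn := orwStep_nonneg hδ (δ := δ) j m b
        nlinarith
      have hsum : orwStep δ j m (j+1) + ∑ b ∈ (Finset.Icc 1 n).erase (j+1),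
          orwStep δ j m b = ∑ b ∈ Finset.Icc 1 n, orwStep δ j m b :=
        Finset.add_sum_erase _ _ hj1mem
      have hsum_le : ∑ b ∈ Finset.Icc 1 n, orwStep δ j m b ≤ 1 :=
        step_sum_le_one hδ hn h1 (by omega) m
      have hup : μ ≤ orwStep δ j m (j+1) := by rw [hstepup]; exact min_le_stepUp _ _
      have hpowL : μ^L ≤ 1 := pow_le_one₀ hμ0.le hμ1
      have hpow : μ^(L+1) ≤ orwStep δ j m (j+1) * μ^L := by
        rw [pow_succ, mul_comm (μ^L) μ]
        exact mul_le_mul_of_nonneg_right hup (pow_nonneg hμ0.le L)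
      nlinarith [orwStep_nonneg hδ (δ := δ) j m (j+1)]
    · -- j = n
      have hje : j = n := by omega
      have hbound : ∑ b ∈ Finset.Icc 1 n, orwStep δ j m b * Phi δ n L b (max m b)
          ≤ ∑ b ∈ Finset.Icc 1 n, orwStep δ j m b := by
        apply Finset.sum_le_sum
        intro b hb
        obtain ⟨hb1, hb2⟩ := Finset.mem_Icc.mp hb
        have := Phi_le_one hδ hn L hb1 (le_max_right m b) (by omega)
        have hnn := orwStep_nonneg hδ (δ := δ) j m b
        nlinarith
      rw [step_sum_Icc hδ hn h1 (by omega) m] at hbound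
      have hup : μ ≤ orwStep δ j m (n+1) := by
        have : n + 1 = j + 1 := by omega
        rw [this, hstepup]
        exact min_le_stepUp _ _
      have hpow : μ^(L+1) ≤ μ := by
        calc μ^(L+1) ≤ μ^1 := pow_le_pow_of_le_one hμ0.le hμ1 (by omega)
          _ = μ := pow_one μ
      have := orwStep_nonneg hδ (δ := δ) j m 0
      linarith


lemma Phi_prod (hδ : 0 < δ) {L : ℕ} {c : ℝ} (hc : 0 ≤ c)
    (hL : ∀ j m : ℕ, 1 ≤ j → j ≤ m → m ≤ n → Phi δ n L j m ≤ c) :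
    ∀ (L' : ℕ) {j m : ℕ}, 1 ≤ j → j ≤ m → m ≤ n →
      Phi δ n (L' + L) j m ≤ Phi δ n L' j m * c := by
  intro L'
  induction L' with
  | zero =>
    intro j m h1 hjm hmn
    rw [zero_add]
    have : Phi δ n 0 j m = 1 := rfl
    rw [this, one_mul]
    exact hL j m h1 hjm hmn
  | succ L' ih =>
    intro j m h1 hjm hmn
    have he : L' + 1 + L = (L' + L) + 1 := by omega
    rw [he]
    show ∑ b ∈ Finset.Icc 1 n, orwStep δ j m b * Phi δ n (L' + L) b (max m b)
      ≤ Phi δ n (L'+1) j m * c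
    have : Phi δ n (L'+1) j m * c
        = ∑ b ∈ Finset.Icc 1 n, orwStep δ j m b * Phi δ n L' b (max m b) * c := by
      show (∑ b ∈ Finset.Icc 1 n, orwStep δ j m b * Phi δ n L' b (max m b)) * c = _
      rw [Finset.sum_mul]
    rw [this]
    apply Finset.sum_le_sum
    intro b hb
    obtain ⟨hb1, hb2⟩ := Finset.mem_Icc.mp hb
    rw [mul_assoc]
    apply mul_le_mul_of_nonneg_left _ (orwStep_nonneg hδ _ _ _)
    exact ih hb1 (le_max_right m b) (by omega)

lemma Phi_pow (hδ : 0 < δ) (hn : 1 ≤ n) :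
    ∀ (L : ℕ) {j m : ℕ}, 1 ≤ j → j ≤ m → m ≤ n →
      Phi δ n (L * n) j m ≤ (1 - (min (1/2 : ℝ) (1/(1+δ)))^n)^L := by
  set μ := min (1/2 : ℝ) (1/(1+δ)) with hμ
  have hμ0 : 0 < μ := mu_pos hδ
  have hμ1 : μ ≤ 1 := mu_le_one hδ
  have hq0 : 0 ≤ 1 - μ^n := by
    have : μ^n ≤ 1 := pow_le_one₀ hμ0.le hμ1
    linarith
  intro L
  induction L with
  | zero =>
    intro j m h1 hjm hmn
    rw [zero_mul, pow_zero]
    norm_num [Phi]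
  | succ L ih =>
    intro j m h1 hjm hmn
    have he : (L+1) * n = n + L * n := by ring
    rw [he]
    calc Phi δ n (n + L * n) j m
        ≤ Phi δ n n j m * (1 - μ^n)^L := by
          apply Phi_prod hδ (pow_nonneg hq0 L) _ n h1 hjm hmn
          intro j' m' h1' hjm' hmn'
          exact ih h1' hjm' hmn'
      _ ≤ (1 - μ^n) * (1 - μ^n)^L := by
          apply mul_le_mul_of_nonneg_right _ (pow_nonneg hq0 L)
          exact Phi_decay hδ hn n h1 hjm hmn (by omega)
      _ = (1 - μ^n)^(L+1) := by rw [pow_succ]; ring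

lemma Wq_eq_Phi (hδ : 0 < δ) :
    ∀ (L K : ℕ), Wq δ n (K + L) = ∑ t ∈ Lset n K, wl δ t * Phi δ n L (jp t) (mp t) := by
  intro L
  induction L with
  | zero =>
    intro K
    unfold Wq
    apply Finset.sum_congr rfl
    intro t _
    show wl δ t = wl δ t * 1
    rw [mul_one]
  | succ L ih =>
    intro K
    have he : K + (L + 1) = (K + 1) + L := by omega
    rw [he, ih (K+1)]
    rw [sum_Lset_succ (fun t => wl δ t * Phi δ n L (jp t) (mp t))]
    apply Finset.sum_congr rfl
    intro t _
    show ∑ b ∈ Finset.Icc 1 n, wl δ (t ++ [b]) * Phi δ n L (jp (t ++ [b])) (mp (t ++ [b]))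
      = wl δ t * ∑ b ∈ Finset.Icc 1 n, orwStep δ (jp t) (mp t) b * Phi δ n L b (max (mp t) b)
    rw [Finset.mul_sum]
    apply Finset.sum_congr rfl
    intro b _
    rw [wl_append, jp_append, mp_append]
    ring

lemma Wq_one_add (hδ : 0 < δ) (hn : 1 ≤ n) (L : ℕ) :
    Wq δ n (1 + L) = Phi δ n L 1 1 := by
  rw [Wq_eq_Phi hδ L 1]
  have h1 : Lset n 1 = Finset.image (fun b => [b]) (Finset.Icc 1 n) := by
    show (Lset n 0).biUnion _ = _
    have : Lset n 0 = {[]} := rfl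
    rw [this, Finset.singleton_biUnion]
    rfl
  rw [h1, Finset.sum_image (by intro b _ b' _ h; simpa using h)]
  have hrw : ∀ b ∈ Finset.Icc 1 n,
      wl δ [b] * Phi δ n L (jp [b]) (mp [b]) = if b = 1 then Phi δ n L 1 1 else 0 := by
    intro b _
    have hj : jp [b] = b := jp_append [] b
    have hm : mp [b] = max (mp []) b := mp_append [] b
    rw [wl_singleton, hj, hm, mp_nil]
    split_ifs with hb
    · subst hb; simp
    · ring
  rw [Finset.sum_congr rfl hrw, Finset.sum_ite_eq' _ 1,
    if_pos (Finset.mem_Icc.mpr ⟨le_refl 1, hn⟩)]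

lemma Wq_bound (hδ : 0 < δ) (hn : 1 ≤ n) (L : ℕ) :
    Wq δ n (1 + L * n) ≤ (1 - (min (1/2 : ℝ) (1/(1+δ)))^n)^L := by
  rw [Wq_one_add hδ hn]
  exact Phi_pow hδ hn L (le_refl 1) (le_refl 1) hn

lemma Aq_nonneg (hδ : 0 < δ) (K : ℕ) : 0 ≤ Aq δ n K :=
  Finset.sum_nonneg fun t _ => mul_nonneg (wl_nonneg hδ t) (h_nonneg hδ _ _)

lemma Aq_le_Wq (hδ : 0 < δ) (K : ℕ) : Aq δ n K ≤ Wq δ n K := by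
  apply Finset.sum_le_sum
  intro t _
  have := h_le_one hδ (jp_le_mp t) (δ := δ) (n := n)
  have := wl_nonneg hδ (δ := δ) t
  nlinarith

lemma dq_nonneg (hδ : 0 < δ) (k : ℕ) : 0 ≤ dq δ n k :=
  Finset.sum_nonneg fun t _ => wl_nonneg hδ _

lemma Dq_mono (hδ : 0 < δ) {K K' : ℕ} (hKK : K ≤ K') : Dq δ n K ≤ Dq δ n K' := by
  apply Finset.sum_le_sum_of_subset_of_nonneg (Finset.range_subset_range.mpr hKK)
  intro k _ _
  exact dq_nonneg hδ k

lemma Dq_le (hδ : 0 < δ) (hn : 1 ≤ n) (K : ℕ) : Dq δ n K ≤ g δ n 1 := by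
  rcases Nat.eq_zero_or_pos K with rfl | hK
  · show Dq δ n 0 ≤ g δ n 1
    unfold Dq
    rw [Finset.sum_range_zero]
    exact g_nonneg hδ 1
  · have := Aq_add_Dq hδ hn K hK
    have := Aq_nonneg hδ (δ := δ) (n := n) K
    linarith

lemma Dq_ge (hδ : 0 < δ) (hn : 1 ≤ n) {K : ℕ} (hK : 1 ≤ K) :
    g δ n 1 - Wq δ n K ≤ Dq δ n K := by
  have h1 := Aq_add_Dq hδ hn K hK
  have h2 := Aq_le_Wq hδ (δ := δ) (n := n) K
  linarith


lemma step_le {j m b : ℕ} (hs : orwStep δ j m b ≠ 0) : b ≤ j + 1 := by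
  unfold orwStep at hs
  split_ifs at hs <;> first | omega | exact absurd rfl hs

lemma pa_bound (hn : 1 ≤ n) {L : List ℕ} (hw : wl δ L ≠ 0) :
    ∀ j, j ≤ L.length → (∀ i, 1 ≤ i → i ≤ j → pa L i ≠ n+1) → pa L j ≤ n := by
  intro j
  induction j with
  | zero => intro _ _; rw [pa_zero]; omega
  | succ j ih =>
    intro hj hint
    have hfac : orwStep δ (pa L j) ((Finset.range (j+1)).sup (pa L)) (pa L (j+1)) ≠ 0 := by
      have hne := Finset.prod_ne_zero_iff.mp hw
      exact hne j (Finset.mem_range.mpr (by omega))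
    have hle : pa L (j+1) ≤ pa L j + 1 := step_le hfac
    have hpj : pa L j ≤ n := ih (by omega) (fun i h1 h2 => hint i h1 (by omega))
    have hne : pa L (j+1) ≠ n+1 := hint (j+1) (by omega) (le_refl _)
    omega

lemma pa_entry {l : List ℕ} {i : ℕ} (hi : i < l.length) : pa l (i+1) = l[i] := by
  rw [pa_cons, List.getD_eq_getElem _ _ hi]

lemma wl_bad (hn : 1 ≤ n) {l : List ℕ} (hval : ∀ x ∈ l, x ≠ 0 ∧ x ≠ n+1)
    {x : ℕ} (hxl : x ∈ l) (hxn : x ∉ Finset.Icc 1 n) : wl δ (l ++ [n+1]) = 0 := by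
  by_contra hw
  obtain ⟨i, hi, rfl⟩ := List.mem_iff_getElem.mp hxl
  have hx0 : l[i] ≠ 0 := (hval _ hxl).1
  have hpa : pa (l ++ [n+1]) (i+1) = l[i] := by
    rw [pa_append l (n+1) (by omega), pa_entry hi]
  have hbound : pa (l ++ [n+1]) (i+1) ≤ n := by
    apply pa_bound hn hw (i+1) (by simp; omega)
    intro i' h1 h2
    have hi' : i' - 1 < l.length := by omega
    have : pa (l ++ [n+1]) i' = l[i'-1] := by
      have he : i' = (i' - 1) + 1 := by omega
      calc pa (l ++ [n+1]) i' = pa (l ++ [n+1]) ((i'-1)+1) := by rw [← he]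
        _ = pa l ((i'-1)+1) := pa_append l (n+1) (by omega)
        _ = l[i'-1] := pa_entry hi' 
    rw [this]
    exact (hval _ (List.getElem_mem hi')).2
  rw [hpa] at hbound
  simp only [Finset.mem_Icc] at hxn
  omega

end ORW

/-- **Lemma 1.** For the once-reinforced random walk with parameter `δ > 0` on the
nonnegative integers started at `0`, the probability that after the first jump it reaches
`n + 1` before returning to `0` equals `∏_{j=1}^n j/(j + δ)`. -/
theorem once_reinforced_walk_escape_probability
    {Ω : Type*} [MeasurableSpace Ω] (P : Measure Ω) [IsProbabilityMeasure P]
    (δ : ℝ) (hδ : 0 < δ) (X : ℕ → Ω → ℕ) (hXmeas : ∀ k, Measurable (X k))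
    (hstart : P {ω | X 0 ω = 0} = 1)
    (hstep : ∀ (k : ℕ) (a : ℕ → ℕ),
      P {ω | ∀ j ≤ k + 1, X j ω = a j}
        = P {ω | ∀ j ≤ k, X j ω = a j}
            * ENNReal.ofReal (orwStep δ (a k) ((Finset.range (k + 1)).sup a) (a (k + 1))))
    (n : ℕ) (hn : 1 ≤ n) :
    P {ω | ∃ k : ℕ, X k ω = n + 1 ∧ ∀ j, 0 < j → j < k → X j ω ≠ 0}
      = ENNReal.ofReal (∏ j ∈ Finset.Icc 1 n, (j : ℝ) / ((j : ℝ) + δ)) := by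
  
  classical
  have hS0meas : MeasurableSet {ω | X 0 ω = 0} := by
    have : {ω | X 0 ω = 0} = X 0 ⁻¹' {0} := rfl
    rw [this]; exact hXmeas 0 (measurableSet_singleton 0)
  -- cylinder probabilities
  have hcyl : ∀ (a : ℕ → ℕ), a 0 = 0 → ∀ k, P {ω | ∀ j ≤ k, X j ω = a j}
      = ENNReal.ofReal (∏ i ∈ Finset.range k,
          orwStep δ (a i) ((Finset.range (i+1)).sup a) (a (i+1))) := by
    intro a ha k
    induction k with
    | zero =>
      have he : {ω | ∀ j ≤ 0, X j ω = a j} = {ω | X 0 ω = 0} := by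
        ext ω; simp [Nat.le_zero, ha]
      rw [he, hstart, Finset.prod_range_zero, ENNReal.ofReal_one]
    | succ k ih =>
      rw [hstep k a, ih, Finset.prod_range_succ, ENNReal.ofReal_mul
        (Finset.prod_nonneg fun i _ => ORW.orwStep_nonneg hδ _ _ _)]
  have hcylL : ∀ l : List ℕ,
      P {ω | ∀ j ≤ l.length, X j ω = ORW.pa l j} = ENNReal.ofReal (ORW.wl δ l) := by
    intro l
    exact hcyl (ORW.pa l) rfl l.length
  -- the events
  set E : Set Ω := {ω | ∃ k : ℕ, X k ω = n + 1 ∧ ∀ j, 0 < j → j < k → X j ω ≠ 0} with hE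
  set F : ℕ → Set Ω := fun K =>
    {ω | (∃ k ≤ K, X k ω = n + 1 ∧ ∀ j, 0 < j → j < k → X j ω ≠ 0) ∧ X 0 ω = 0} with hF
  -- main finite-horizon computation
  have key : ∀ K : ℕ, P (F K) = ENNReal.ofReal (ORW.Dq δ n K) := by
    intro K
    set G : List ℕ → Set Ω := fun l =>
      if l.length + 1 ≤ K ∧ ∀ x ∈ l, x ≠ 0 ∧ x ≠ n+1 then
        {ω | ∀ j ≤ (l ++ [n+1]).length, X j ω = ORW.pa (l ++ [n+1]) j}
      else ∅ with hG
    have hlenG : ∀ l : List ℕ, (l ++ [n+1]).length = l.length + 1 := by simp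
    -- description of a point in a valid cylinder
    have hGmem : ∀ (l : List ℕ) (ω : Ω),
        (l.length + 1 ≤ K ∧ ∀ x ∈ l, x ≠ 0 ∧ x ≠ n+1) → ω ∈ G l →
        (X 0 ω = 0 ∧ (∀ i < l.length, X (i+1) ω = l.getD i 0) ∧ X (l.length + 1) ω = n+1) := by
      intro l ω hv hω
      rw [hG] at hω
      simp only [if_pos hv] at hω
      have hωc : ∀ j ≤ l.length + 1, X j ω = ORW.pa (l ++ [n+1]) j := by
        intro j hj
        exact hω j (by rw [hlenG]; omega)
      refine ⟨?_, ?_, ?_⟩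
      · have := hωc 0 (by omega)
        rw [ORW.pa_zero] at this; exact this
      · intro i hi
        have := hωc (i+1) (by omega)
        rw [ORW.pa_append l (n+1) (by omega), ORW.pa_cons] at this
        exact this
      · have := hωc (l.length + 1) (le_refl _)
        rw [ORW.pa_append_last] at this; exact this
    -- cover
    have hcover : F K = ⋃ l : List ℕ, G l := by
      apply Set.Subset.antisymm
      · rintro ω ⟨⟨k, hkK, hk⟩, h0⟩
        have hex : ∃ k : ℕ, X k ω = n + 1 ∧ ∀ j, 0 < j → j < k → X j ω ≠ 0 := ⟨k, hk⟩
        obtain ⟨hk₀1, hk₀2⟩ := Nat.find_spec hex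
        set k₀ := Nat.find hex with hk₀def
        have hk₀K : k₀ ≤ K := le_trans (Nat.find_le hk) hkK
        have hk₀pos : 1 ≤ k₀ := by
          by_contra hcon
          have h0' : k₀ = 0 := by omega
          rw [h0'] at hk₀1
          rw [h0] at hk₀1
          omega
        set l : List ℕ := List.ofFn (fun i : Fin (k₀ - 1) => X ((i : ℕ)+1) ω) with hl
        have hllen : l.length = k₀ - 1 := by rw [hl, List.length_ofFn]
        have hlget : ∀ i (hi : i < l.length), l[i] = X (i+1) ω := by
          intro i hi
          simp [hl, List.getElem_ofFn]
        have hvalid : l.length + 1 ≤ K ∧ ∀ x ∈ l, x ≠ 0 ∧ x ≠ n+1 := by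
          constructor
          · omega
          · intro x hx
            obtain ⟨i, hi, rfl⟩ := List.mem_iff_getElem.mp hx
            rw [hlget i hi]
            constructor
            · exact hk₀2 (i+1) (by omega) (by omega)
            · intro hcon
              have hQ : X (i+1) ω = n + 1 ∧ ∀ j, 0 < j → j < i+1 → X j ω ≠ 0 :=
                ⟨hcon, fun j hj1 hj2 => hk₀2 j hj1 (by omega)⟩
              exact Nat.find_min hex (by omega) hQ
        apply Set.mem_iUnion.mpr ⟨l, ?_⟩
        rw [hG]
        simp only [if_pos hvalid]
        intro j hj
        rw [hlenG] at hj
        rcases Nat.eq_zero_or_pos j with rfl | hjpos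
        · rw [ORW.pa_zero]; exact h0
        · rcases Nat.lt_or_ge j (l.length + 1) with hjl | hjl
          · have hj1 : j - 1 < l.length := by omega
            have he : j = (j - 1) + 1 := by omega
            calc X j ω = X ((j-1)+1) ω := by rw [← he]
              _ = l[j-1] := (hlget _ hj1).symm
              _ = ORW.pa (l ++ [n+1]) j := by
                  rw [← ORW.pa_entry hj1, ← he,
                    ORW.pa_append l (n+1) (by omega)]
          · have hje : j = l.length + 1 := by omega
            rw [hje, ORW.pa_append_last]
            have : l.length + 1 = k₀ := by omega
            rw [this]
            exact hk₀1
      · intro ω hω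
        obtain ⟨l, hω⟩ := Set.mem_iUnion.mp hω
        by_cases hv : l.length + 1 ≤ K ∧ ∀ x ∈ l, x ≠ 0 ∧ x ≠ n+1
        · obtain ⟨h0, hmid, hend⟩ := hGmem l ω hv hω
          refine ⟨⟨l.length + 1, hv.1, hend, ?_⟩, h0⟩
          intro j hj1 hj2
          have hj1' : j - 1 < l.length := by omega
          have hmid' := hmid (j-1) hj1'
          have he : (j - 1) + 1 = j := by omega
          rw [he] at hmid'
          rw [hmid', List.getD_eq_getElem _ _ hj1']
          exact (hv.2 (l[j-1]'hj1') (List.getElem_mem hj1')).1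
        · rw [hG] at hω; simp only [if_neg hv] at hω; exact absurd hω (Set.notMem_empty ω)
    -- disjointness
    have hdisj : Pairwise (Function.onFun Disjoint G) := by
      have hkey : ∀ l l' : List ℕ,
          (l.length + 1 ≤ K ∧ ∀ x ∈ l, x ≠ 0 ∧ x ≠ n+1) →
          (l'.length + 1 ≤ K ∧ ∀ x ∈ l', x ≠ 0 ∧ x ≠ n+1) →
          l.length < l'.length → ∀ ω, ω ∈ G l → ω ∈ G l' → False := by
        intro l l' hv hv' hlen ω hω hω'
        obtain ⟨-, -, hend⟩ := hGmem l ω hv hω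
        obtain ⟨-, hmid', -⟩ := hGmem l' ω hv' hω'
        have h1 := hmid' l.length hlen
        rw [hend, List.getD_eq_getElem _ _ hlen] at h1
        exact (hv'.2 (l'[l.length]'hlen) (List.getElem_mem hlen)).2 h1.symm
      intro l l' hne
      rw [Function.onFun, Set.disjoint_left]
      intro ω hω hω'
      by_cases hv : l.length + 1 ≤ K ∧ ∀ x ∈ l, x ≠ 0 ∧ x ≠ n+1
      · by_cases hv' : l'.length + 1 ≤ K ∧ ∀ x ∈ l', x ≠ 0 ∧ x ≠ n+1
        · rcases lt_trichotomy l.length l'.length with h | h | h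
          · exact hkey l l' hv hv' h ω hω hω'
          · -- equal lengths: lists must be equal
            apply hne
            apply List.ext_getElem h
            intro i hi hi'
            obtain ⟨-, hmid, -⟩ := hGmem l ω hv hω
            obtain ⟨-, hmid', -⟩ := hGmem l' ω hv' hω'
            have e1 := hmid i hi
            have e2 := hmid' i hi'
            rw [List.getD_eq_getElem _ _ hi] at e1
            rw [List.getD_eq_getElem _ _ hi'] at e2
            rw [← e1, ← e2]
          · exact hkey l' l hv' hv h ω hω' hω
        · rw [hG] at hω'; simp only [if_neg hv'] at hω'; exact absurd hω' (Set.notMem_empty ω)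
      · rw [hG] at hω; simp only [if_neg hv] at hω; exact absurd hω (Set.notMem_empty ω)
    -- measurability
    have hmeas : ∀ l : List ℕ, MeasurableSet (G l) := by
      intro l
      simp only [hG]
      split_ifs with hv
      · have : {ω | ∀ j ≤ (l ++ [n+1]).length, X j ω = ORW.pa (l ++ [n+1]) j}
            = ⋂ (j : ℕ) (_ : j ≤ (l ++ [n+1]).length),
                X j ⁻¹' {ORW.pa (l ++ [n+1]) j} := by
          ext ω; simp [Set.mem_iInter]
        rw [this]
        exact MeasurableSet.iInter fun j => MeasurableSet.iInter fun _ =>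
          hXmeas j (measurableSet_singleton _)
      · exact MeasurableSet.empty
    -- vanishing off the good finite set
    have hzero : ∀ l ∉ (Finset.range K).biUnion (ORW.Lset n), P (G l) = 0 := by
      intro l hl
      by_cases hv : l.length + 1 ≤ K ∧ ∀ x ∈ l, x ≠ 0 ∧ x ≠ n+1
      · have hbad : ∃ x ∈ l, x ∉ Finset.Icc 1 n := by
          by_contra hcon
          push_neg at hcon
          apply hl
          apply Finset.mem_biUnion.mpr
          exact ⟨l.length, Finset.mem_range.mpr (by omega),
            ORW.mem_Lset.mpr ⟨rfl, hcon⟩⟩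
        obtain ⟨x, hxl, hxn⟩ := hbad
        have hwl0 : ORW.wl δ (l ++ [n+1]) = 0 := ORW.wl_bad hn hv.2 hxl hxn
        rw [hG]
        simp only [if_pos hv]
        have := hcylL (l ++ [n+1])
        rw [this, hwl0, ENNReal.ofReal_zero]
      · rw [hG]; simp only [if_neg hv]; exact measure_empty
    -- the sum over good paths
    have hdisjL : (↑(Finset.range K) : Set ℕ).PairwiseDisjoint (ORW.Lset n) := by
      intro k _ k' _ hkk
      rw [Function.onFun, Finset.disjoint_left]
      intro t ht ht'
      have h1 := (ORW.mem_Lset.mp ht).1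
      have h2 := (ORW.mem_Lset.mp ht').1
      omega
    have hsum : ∑ l ∈ (Finset.range K).biUnion (ORW.Lset n), P (G l)
        = ENNReal.ofReal (ORW.Dq δ n K) := by
      rw [Finset.sum_biUnion hdisjL]
      unfold ORW.Dq
      rw [ENNReal.ofReal_sum_of_nonneg (fun k _ => ORW.dq_nonneg hδ k)]
      apply Finset.sum_congr rfl
      intro k hk
      unfold ORW.dq
      rw [ENNReal.ofReal_sum_of_nonneg (fun t _ => ORW.wl_nonneg hδ _)]
      apply Finset.sum_congr rfl
      intro t ht
      obtain ⟨hlen, hmem⟩ := ORW.mem_Lset.mp ht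
      have hkK := Finset.mem_range.mp hk
      have hv : t.length + 1 ≤ K ∧ ∀ x ∈ t, x ≠ 0 ∧ x ≠ n+1 := by
        constructor
        · omega
        · intro x hx
          have := Finset.mem_Icc.mp (hmem x hx)
          omega
      rw [hG]
      simp only [if_pos hv]
      exact hcylL (t ++ [n+1])
    rw [hcover, measure_iUnion hdisj hmeas, tsum_eq_sum hzero, hsum]
  -- assembling the limit
  have hS0c : P {ω | X 0 ω = 0}ᶜ = 0 :=
    (prob_compl_eq_zero_iff hS0meas).mpr hstart
  have hPE : P E = P (⋃ K, F K) := by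
    have hsub1 : E ⊆ (⋃ K, F K) ∪ {ω | X 0 ω = 0}ᶜ := by
      intro ω hω
      obtain ⟨k, hk⟩ := hω
      by_cases h0 : X 0 ω = 0
      · exact Or.inl (Set.mem_iUnion.mpr ⟨k, ⟨⟨k, le_refl k, hk⟩, h0⟩⟩)
      · exact Or.inr h0
    have hsub2 : (⋃ K, F K) ⊆ E := by
      intro ω hω
      obtain ⟨K, ⟨⟨k, _, hk⟩, _⟩⟩ := Set.mem_iUnion.mp hω
      exact ⟨k, hk⟩
    apply le_antisymm
    · calc P E ≤ P ((⋃ K, F K) ∪ {ω | X 0 ω = 0}ᶜ) := measure_mono hsub1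
        _ ≤ P (⋃ K, F K) + P {ω | X 0 ω = 0}ᶜ := measure_union_le _ _
        _ = P (⋃ K, F K) := by rw [hS0c, add_zero]
    · exact measure_mono hsub2
  have hdirF : Directed (· ⊆ ·) F := by
    apply Monotone.directed_le
    intro K K' hKK ω hω
    obtain ⟨⟨k, hkK, hk⟩, h0⟩ := hω
    exact ⟨⟨k, le_trans hkK hKK, hk⟩, h0⟩
  rw [hPE, hdirF.measure_iUnion]
  have hgoal : ENNReal.ofReal (∏ j ∈ Finset.Icc 1 n, (j : ℝ) / ((j : ℝ) + δ))
      = ENNReal.ofReal (ORW.g δ n 1) := rfl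
  rw [hgoal]
  have hsup : (⨆ K, P (F K)) = ⨆ K, ENNReal.ofReal (ORW.Dq δ n K) :=
    iSup_congr key
  rw [hsup]
  set μ := min (1/2 : ℝ) (1/(1+δ)) with hμ
  have hμ0 : 0 < μ := ORW.mu_pos hδ
  have hμ1 : μ ≤ 1 := ORW.mu_le_one hδ
  have hq0 : 0 ≤ 1 - μ^n := by
    have : μ^n ≤ 1 := pow_le_one₀ hμ0.le hμ1
    linarith
  have hq1 : 1 - μ^n < 1 := by
    have : 0 < μ^n := pow_pos hμ0 n
    linarith
  apply le_antisymm
  · exact iSup_le fun K => ENNReal.ofReal_le_ofReal (ORW.Dq_le hδ hn K)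
  · have hstep' : ∀ L : ℕ, ENNReal.ofReal (ORW.g δ n 1 - (1 - μ^n)^L)
        ≤ ⨆ K, ENNReal.ofReal (ORW.Dq δ n K) := by
      intro L
      have h1 : ORW.g δ n 1 - (1 - μ^n)^L ≤ ORW.Dq δ n (1 + L*n) := by
        have h2 := ORW.Dq_ge hδ hn (δ := δ) (K := 1 + L*n) (by omega)
        have h3 := ORW.Wq_bound hδ hn (δ := δ) L
        linarith
      exact le_trans (ENNReal.ofReal_le_ofReal h1)
        (le_iSup (fun K => ENNReal.ofReal (ORW.Dq δ n K)) (1 + L*n))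
    have htend : Filter.Tendsto (fun L : ℕ => ENNReal.ofReal (ORW.g δ n 1 - (1 - μ^n)^L))
        Filter.atTop (nhds (ENNReal.ofReal (ORW.g δ n 1))) := by
      apply ENNReal.tendsto_ofReal
      have hp : Filter.Tendsto (fun L : ℕ => (1 - μ^n)^L) Filter.atTop (nhds 0) :=
        tendsto_pow_atTop_nhds_zero_of_lt_one hq0 hq1
      have := Filter.Tendsto.const_sub (ORW.g δ n 1) hp
      simpa using this
    exact le_of_tendsto htend (Filter.Eventually.of_forall hstep')
end

section
/- Let h be a nonnegative random variable whose law is the exponential distribution with rate 1, let 𝒢 be a sub-σ-algebra independent of h, let Y be a 𝒢-measurable random variable, and let A ∈ 𝒢 with P(A ∩ {h < Y}) > 0. Then for every x ≥ 0, P({h ≥ x} ∩ A ∩ {h < Y}) ≤ e^{-x} · P(A ∩ {h < Y}); that is, conditionally on A ∩ {h < Y}, the random variable h is stochastically dominated by an exponential with rate 1. -/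
open MeasureTheory ProbabilityTheory

lemma expMeasure_one_Iio (y : ℝ) :
    ProbabilityTheory.expMeasure 1 (Set.Iio y) = ENNReal.ofReal (1 - Real.exp (-y)) := by
  haveI : IsProbabilityMeasure (expMeasure 1) := isProbabilityMeasure_expMeasure one_pos
  have hsing : expMeasure 1 {y} = 0 := by
    have : (volume : Measure ℝ) {y} = 0 := measure_singleton y
    exact (withDensity_absolutelyContinuous volume (gammaPDF 1 1)) this
  have h1 : Set.Iio y = Set.Iic y \ {y} := by ext t; simp [lt_iff_le_and_ne]
  rw [h1, measure_diff_null hsing, ← ofReal_cdf (expMeasure 1) y]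
  have := cdf_expMeasure_eq one_pos y
  rw [this]
  rcases le_or_gt 0 y with hy | hy
  · simp [hy]
  · rw [if_neg (not_le.2 hy), ENNReal.ofReal_zero]
    symm
    rw [ENNReal.ofReal_eq_zero]
    have : 1 ≤ Real.exp (-y) := by
      rw [Real.one_le_exp_iff]; linarith
    linarith

lemma expMeasure_one_Ico {x y : ℝ} (hx : 0 ≤ x) :
    ProbabilityTheory.expMeasure 1 (Set.Ico x y)
      = ENNReal.ofReal (Real.exp (-x) - Real.exp (-y)) := by
  rcases le_or_gt y x with hyx | hxy
  · rw [Set.Ico_eq_empty (not_lt.2 hyx), measure_empty]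
    symm
    rw [ENNReal.ofReal_eq_zero, sub_nonpos]
    exact Real.exp_le_exp.2 (by linarith)
  · have h1 : Set.Ico x y = Set.Iio y \ Set.Iio x := by
      ext t; simp [Set.mem_Ico, not_lt, and_comm]
    rw [h1, measure_diff (Set.Iio_subset_Iio hxy.le) measurableSet_Iio.nullMeasurableSet
      (by rw [expMeasure_one_Iio]; exact ENNReal.ofReal_ne_top),
      expMeasure_one_Iio, expMeasure_one_Iio,
      ← ENNReal.ofReal_sub _ (by
        rw [sub_nonneg, Real.exp_le_one_iff]; linarith)]
    ring_nf

/-- **Conditioned exponential clocks are stochastically dominated.** Let `h` be a nonnegative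
random variable with exponential law of rate `1`, let `𝒢` be a sub-σ-algebra independent of
`h`, let `Y` be `𝒢`-measurable, and let `A ∈ 𝒢` with `P(A ∩ {h < Y}) > 0`. Then for every
`x ≥ 0`, `P({h ≥ x} ∩ A ∩ {h < Y}) ≤ e^{-x} P(A ∩ {h < Y})`; that is, conditionally on
`A ∩ {h < Y}`, the variable `h` is stochastically dominated by an exponential of rate `1`. -/
theorem conditioned_exponential_stochastically_dominated
    {Ω : Type*} [m : MeasurableSpace Ω] (P : Measure Ω) [IsProbabilityMeasure P]
    (h : Ω → ℝ) (hmeas : Measurable h) (hnonneg : ∀ ω, 0 ≤ h ω)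
    (hlaw : P.map h = ProbabilityTheory.expMeasure 1)
    (𝒢 : MeasurableSpace Ω) (h𝒢 : 𝒢 ≤ m)
    (hindep : ProbabilityTheory.Indep (MeasurableSpace.comap h inferInstance) 𝒢 P)
    (Y : Ω → ℝ) (hY : Measurable[𝒢] Y)
    (A : Set Ω) (hA : MeasurableSet[𝒢] A)
    (hpos : 0 < P (A ∩ {ω | h ω < Y ω})) :
    ∀ x : ℝ, 0 ≤ x →
      P ({ω | x ≤ h ω} ∩ A ∩ {ω | h ω < Y ω})
        ≤ ENNReal.ofReal (Real.exp (-x)) * P (A ∩ {ω | h ω < Y ω}) := by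
  intro x hx
  set ν : Measure ℝ := expMeasure 1 with hν
  haveI : IsProbabilityMeasure ν := isProbabilityMeasure_expMeasure one_pos
  set ind : Ω → ℝ := A.indicator 1 with hind
  set W : Ω → ℝ × ℝ := fun ω => (Y ω, ind ω) with hWdef
  have hW𝒢 : Measurable[𝒢] W := hY.prodMk (measurable_one.indicator hA)
  letI : MeasurableSpace Ω := m
  have hWm : Measurable[m] W := fun s hs => h𝒢 _ (hW𝒢 hs)
  have hIndep : IndepFun W h P :=
    IndepFun.symm (indep_of_indep_of_le_right hindep hW𝒢.comap_le)
  have hmap : P.map (fun ω => (W ω, h ω)) = (P.map W).prod (P.map h) :=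
    (indepFun_iff_map_prod_eq_prod_map_map (@Measurable.aemeasurable Ω (ℝ × ℝ) m _ W P hWm) (@Measurable.aemeasurable Ω ℝ m _ h P hmeas)).mp hIndep
  -- key identity
  have key : ∀ z : ℝ, P ({ω | z ≤ h ω} ∩ A ∩ {ω | h ω < Y ω})
      = ∫⁻ w, ν {t : ℝ | z ≤ t ∧ t < w.1 ∧ w.2 = 1} ∂(P.map W) := by
    intro z
    set s : Set ((ℝ × ℝ) × ℝ) := {p | z ≤ p.2 ∧ p.2 < p.1.1 ∧ p.1.2 = 1} with hsdef
    have hs : MeasurableSet s := by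
      apply MeasurableSet.inter
      · exact measurable_snd measurableSet_Ici
      apply MeasurableSet.inter
      · exact measurableSet_lt measurable_snd (measurable_fst.fst)
      · exact (measurable_fst.snd) (measurableSet_singleton 1)
    have hpre : (fun ω => (W ω, h ω)) ⁻¹' s
        = {ω | z ≤ h ω} ∩ A ∩ {ω | h ω < Y ω} := by
      ext ω
      by_cases hωA : ω ∈ A <;>
        simp [hsdef, hWdef, hind, Set.indicator_apply, hωA, and_assoc, and_comm]
    calc P ({ω | z ≤ h ω} ∩ A ∩ {ω | h ω < Y ω})
        = P.map (fun ω => (W ω, h ω)) s := by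
          rw [Measure.map_apply (hWm.prodMk hmeas) hs, hpre]
      _ = ((P.map W).prod ν) s := by rw [hmap, hlaw]
      _ = ∫⁻ w, ν (Prod.mk w ⁻¹' s) ∂(P.map W) := Measure.prod_apply hs
      _ = ∫⁻ w, ν {t : ℝ | z ≤ t ∧ t < w.1 ∧ w.2 = 1} ∂(P.map W) := rfl
  have hzero : {ω | (0:ℝ) ≤ h ω} ∩ A = A := by
    rw [Set.inter_eq_right]; intro ω _; exact hnonneg ω
  have key0 : P (A ∩ {ω | h ω < Y ω})
      = ∫⁻ w, ν {t : ℝ | (0:ℝ) ≤ t ∧ t < w.1 ∧ w.2 = 1} ∂(P.map W) := by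
    rw [← key 0, hzero]
  rw [key x, key0, ← lintegral_const_mul' _ _ ENNReal.ofReal_ne_top]
  apply lintegral_mono
  intro w
  dsimp only
  by_cases hw : w.2 = 1
  · have e1 : {t : ℝ | x ≤ t ∧ t < w.1 ∧ w.2 = 1} = Set.Ico x w.1 := by
      ext t; simp [hw, Set.mem_Ico]
    have e2 : {t : ℝ | (0:ℝ) ≤ t ∧ t < w.1 ∧ w.2 = 1} = Set.Ico 0 w.1 := by
      ext t; simp [hw, Set.mem_Ico]
    rw [e1, e2, hν, expMeasure_one_Ico hx, expMeasure_one_Ico le_rfl,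
      ← ENNReal.ofReal_mul (Real.exp_nonneg _)]
    apply ENNReal.ofReal_le_ofReal
    have h1 : Real.exp (-x) ≤ 1 := Real.exp_le_one_iff.2 (by linarith)
    have h2 : (0:ℝ) ≤ (1 - Real.exp (-x)) * Real.exp (-w.1) :=
      mul_nonneg (by linarith) (Real.exp_pos _).le
    rw [neg_zero, Real.exp_zero]
    nlinarith
  · have e1 : {t : ℝ | x ≤ t ∧ t < w.1 ∧ w.2 = 1} = (∅ : Set ℝ) := by
      ext t; simp [hw]
    have e2 : {t : ℝ | (0:ℝ) ≤ t ∧ t < w.1 ∧ w.2 = 1} = (∅ : Set ℝ) := by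
      ext t; simp [hw]
    simp [e1, e2]
end
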